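/- For a permutation ω of Fin (k+1), deleting the entry ω(i) and monotonically reordering the remaining values yields a well-defined permutation dᵢ(ω) of Fin k, and these face maps satisfy the simplicial identity dᵢ ∘ dⱼ = dⱼ₋₁ ∘ dᵢ for i < j. -/

import Mathlib

private lemma sa_val {n : ℕ} (p : Fin (n + 1)) (q : Fin n) :
    (p.succAbove q : ℕ) = if (q : ℕ) < (p : ℕ) then (q : ℕ) else (q : ℕ) + 1 := by
  rw [Fin.succAbove]
  split_ifs with h1 h2 h2 <;>
    simp_all [Fin.lt_def, Fin.coe_castSucc, Fin.val_succ]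

private lemma key {n : ℕ} (p r : Fin (n + 2)) (q s : Fin (n + 1)) (x : Fin n)
    (hpr : p ≠ r) (hq : p.succAbove q = r) (hs : r.succAbove s = p) :
    p.succAbove (q.succAbove x) = r.succAbove (s.succAbove x) := by
  have hq' := congrArg Fin.val hq
  have hs' := congrArg Fin.val hs
  rw [sa_val] at hq' hs'
  have hpr' : (p : ℕ) ≠ (r : ℕ) := fun h => hpr (Fin.ext h)
  apply Fin.ext
  rw [sa_val, sa_val, sa_val, sa_val]
  split_ifs at * <;> omega

private def D (k : ℕ) (i : Fin (k + 1)) (ω : Equiv.Perm (Fin (k + 1))) : Equiv.Perm (Fin k) :=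
  Equiv.removeNone ((finSuccEquiv' i).symm.trans (ω.trans (finSuccEquiv' (ω i))))

private lemma D_char (k : ℕ) (i : Fin (k + 1)) (ω : Equiv.Perm (Fin (k + 1))) (j : Fin k) :
    (ω i).succAbove (D k i ω j) = ω (i.succAbove j) := by
  set e := (finSuccEquiv' i).symm.trans (ω.trans (finSuccEquiv' (ω i))) with he
  have h2 : e (some j) = finSuccEquiv' (ω i) (ω (i.succAbove j)) := by
    simp [he, finSuccEquiv'_symm_some]
  have hsome : e (some j) = some (e.removeNone j) := by
    refine (Equiv.removeNone_some e ?_).symm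
    rw [h2]
    rcases h : finSuccEquiv' (ω i) (ω (i.succAbove j)) with _ | a
    · exfalso
      have := congrArg (finSuccEquiv' (ω i)).symm h
      simp [finSuccEquiv'_symm_none] at this
    · exact ⟨a, rfl⟩
  rw [h2] at hsome
  have := congrArg (finSuccEquiv' (ω i)).symm hsome
  simp only [Equiv.symm_apply_apply, finSuccEquiv'_symm_some] at this
  exact this.symm

theorem perm_face_maps_exist :
    ∃ d : ∀ k : ℕ, Fin (k + 1) → Equiv.Perm (Fin (k + 1)) → Equiv.Perm (Fin k),
      (∀ (k : ℕ) (i : Fin (k + 1)) (ω : Equiv.Perm (Fin (k + 1))) (j : Fin k),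
        (ω i).succAbove (d k i ω j) = ω (i.succAbove j)) ∧
      (∀ (k : ℕ) (i : Fin (k + 1)) (j : Fin (k + 2)) (hij : i.castSucc < j) (hj : j ≠ 0)
        (ω : Equiv.Perm (Fin (k + 2))),
        d k i (d (k + 1) j ω) = d k (j.pred hj) (d (k + 1) i.castSucc ω)) := by
  refine ⟨D, D_char, ?_⟩
  intro k i j hij hj ω
  apply Equiv.ext
  intro x
  set ω' := D (k + 1) j ω with hω'
  set ω'' := D (k + 1) i.castSucc ω with hω''
  set jp := j.pred hj with hjp
  have hival : (i : ℕ) < (j : ℕ) := by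
    have := Fin.lt_def.mp hij; simpa using this
  have hjpval : (jp : ℕ) = (j : ℕ) - 1 := Fin.coe_pred j hj
  -- index identity
  have hidx : j.succAbove (i.succAbove x) = i.castSucc.succAbove (jp.succAbove x) := by
    apply Fin.ext
    rw [sa_val, sa_val, sa_val, sa_val]
    simp only [Fin.coe_castSucc]
    split_ifs at * <;> omega
  have hji : j.succAbove i = i.castSucc := Fin.succAbove_of_castSucc_lt _ _ hij
  have hij2 : i.castSucc.succAbove jp = j := by
    apply Fin.ext
    rw [sa_val]
    simp only [Fin.coe_castSucc]
    split_ifs at * <;> omega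
  have hq : (ω j).succAbove (ω' i) = ω i.castSucc := by
    rw [hω', D_char, hji]
  have hs : (ω i.castSucc).succAbove (ω'' jp) = ω j := by
    rw [hω'', D_char, hij2]
  have hpr : ω j ≠ ω i.castSucc := fun h => (ne_of_gt hij) (ω.injective h)
  have hA : (ω j).succAbove ((ω' i).succAbove (D k i ω' x)) = ω (j.succAbove (i.succAbove x)) := by
    rw [D_char, hω', D_char]
  have hB : (ω i.castSucc).succAbove ((ω'' jp).succAbove (D k jp ω'' x))
      = ω (i.castSucc.succAbove (jp.succAbove x)) := by
    rw [D_char, hω'', D_char]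
  have hkey := key (ω j) (ω i.castSucc) (ω' i) (ω'' jp) (D k jp ω'' x) hpr hq hs
  have : (ω j).succAbove ((ω' i).succAbove (D k i ω' x))
      = (ω j).succAbove ((ω' i).succAbove (D k jp ω'' x)) := by
    rw [hA, hidx, ← hB, ← hkey]
  exact Fin.succAbove_right_injective (Fin.succAbove_right_injective this)
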